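/- If a subset X of Ω lies in a self-complementary orbit of G ≤ Sym(Ω) on 2^Ω, then there exists g ∈ G of 2-power order, acting without fixed points on Ω, such that Ω = X ∪ g(X) and X ∩ g(X) = ∅. -/

import Mathlib

theorem stmt17 {Ω : Type*} [Fintype Ω] (G : Subgroup (Equiv.Perm Ω)) (X : Set Ω)
    (hself : ∃ h ∈ G, h '' X = Xᶜ) :
    ∃ g ∈ G, (∃ k : ℕ, orderOf g = 2 ^ k) ∧ (∀ ω : Ω, g ω ≠ ω) ∧
      X ∪ g '' X = Set.univ ∧ X ∩ g '' X = ∅ := by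
  obtain ⟨h, hG, hX⟩ := hself
  have hcompl : h '' Xᶜ = X := by
    rw [Set.image_compl_eq h.bijective, hX, compl_compl]
  have hodd : ∀ j : ℕ, (h ^ (2 * j + 1)) '' X = Xᶜ := by
    intro j
    induction j with
    | zero => simpa using hX
    | succ j ih =>
      have e : h ^ (2 * (j + 1) + 1) = h * (h * h ^ (2 * j + 1)) := by
        rw [← pow_succ', ← pow_succ']; ring_nf
      rw [e]
      have : ⇑(h * (h * h ^ (2 * j + 1))) = ⇑h ∘ ⇑h ∘ ⇑(h ^ (2 * j + 1)) := by
        ext x; rfl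
      rw [this, Set.image_comp, Set.image_comp, ih, hcompl, hX]
  set n := orderOf h with hn
  have hn0 : n ≠ 0 := (orderOf_pos h).ne'
  set k := n.factorization 2 with hk
  set m := n / 2 ^ k with hm
  have hmdvd : m ∣ n := Nat.ordCompl_dvd n 2
  have hmodd : ¬ 2 ∣ m := Nat.not_dvd_ordCompl Nat.prime_two hn0
  obtain ⟨j, hj⟩ := Nat.odd_iff.mpr (Nat.two_dvd_ne_zero.mp hmodd)
  have hgX : (h ^ m) '' X = Xᶜ := by
    rw [hj]; exact hodd j
  refine ⟨h ^ m, pow_mem hG m, ⟨k, ?_⟩, ?_, ?_, ?_⟩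
  · rw [orderOf_pow, ← hn, Nat.gcd_eq_right hmdvd]
    have hmn : n = 2 ^ k * m := (Nat.ordProj_mul_ordCompl_eq_self n 2).symm
    have hm0 : m ≠ 0 := by
      intro h0; rw [h0, mul_zero] at hmn; exact hn0 hmn
    rw [hmn, Nat.mul_div_cancel _ (Nat.pos_of_ne_zero hm0)]
  · intro ω hω
    by_cases hωX : ω ∈ X
    · have : (h ^ m) ω ∈ Xᶜ := hgX ▸ Set.mem_image_of_mem _ hωX
      rw [hω] at this; exact this hωX
    · have hXc : (h ^ m) '' Xᶜ = X := by
        rw [Set.image_compl_eq (h ^ m).bijective, hgX, compl_compl]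
      have : (h ^ m) ω ∈ X := hXc ▸ Set.mem_image_of_mem _ hωX
      rw [hω] at this; exact hωX this
  · rw [hgX, Set.union_compl_self]
  · rw [hgX, Set.inter_compl_self]
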